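/- Define g : ℤ≤0 × ℕ → ℝ by g(x,ℓ) = (E[|SRW(x,ℓ)|] - |x|)/2, where SRW(x,ℓ) is the position after ℓ steps of a simple symmetric ±1 random walk started at x. Then g satisfies: g(x,0) = 0 for all x ≤ 0; g(x,ℓ) = (g(x+1,ℓ-1) + g(x-1,ℓ-1))/2 for all ℓ > 0 and x < 0; and g(0,ℓ) = g(-1,ℓ-1) + 1/2 for all ℓ > 0. -/

import Mathlib

/-- Expected absolute value of the position after `ℓ` steps of a simple symmetric
±1 random walk started at `x`, computed as a uniform average over the `2^ℓ`
equally likely step sequences. -/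
noncomputable def expAbsSRW (x : ℤ) (ℓ : ℕ) : ℝ :=
  (∑ s : Fin ℓ → Bool, |(x : ℝ) + ∑ i, (if s i then (1 : ℝ) else -1)|) / 2 ^ ℓ

/-- `g x ℓ = (E[|SRW(x,ℓ)|] - |x|)/2`. -/
noncomputable def gSRW (x : ℤ) (ℓ : ℕ) : ℝ := (expAbsSRW x ℓ - |(x : ℝ)|) / 2

lemma expAbsSRW_succ (x : ℤ) (ℓ : ℕ) :
    expAbsSRW x (ℓ + 1) = (expAbsSRW (x + 1) ℓ + expAbsSRW (x - 1) ℓ) / 2 := by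
  unfold expAbsSRW
  rw [← (Fin.consEquiv (fun _ : Fin (ℓ + 1) => Bool)).sum_comp
      (fun s => |(x : ℝ) + ∑ i, (if s i then (1 : ℝ) else -1)|),
    Fintype.sum_prod_type, Fintype.sum_bool]
  have h : ∀ (b : Bool) (s : Fin ℓ → Bool),
      ((x : ℝ) + ∑ i : Fin (ℓ + 1),
        (if (Fin.consEquiv (fun _ : Fin (ℓ + 1) => Bool)) (b, s) i then (1 : ℝ) else -1)) =
      ((x : ℝ) + (if b then (1 : ℝ) else -1)) + ∑ i, (if s i then (1 : ℝ) else -1) := by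
    intro b s
    rw [Fin.sum_univ_succ]
    simp [Fin.consEquiv, Fin.cons_zero, Fin.cons_succ]
    ring
  have h1 : ∀ s : Fin ℓ → Bool,
      |(x : ℝ) + ∑ i : Fin (ℓ + 1),
        (if (Fin.consEquiv (fun _ : Fin (ℓ + 1) => Bool)) (true, s) i then (1 : ℝ) else -1)| =
      |((x : ℝ) + 1) + ∑ i, (if s i then (1 : ℝ) else -1)| := by
    intro s; rw [h true s]; simp
  have h2 : ∀ s : Fin ℓ → Bool,
      |(x : ℝ) + ∑ i : Fin (ℓ + 1),
        (if (Fin.consEquiv (fun _ : Fin (ℓ + 1) => Bool)) (false, s) i then (1 : ℝ) else -1)| =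
      |((x : ℝ) - 1) + ∑ i, (if s i then (1 : ℝ) else -1)| := by
    intro s; rw [h false s]; congr 1 <;> ring
  rw [Finset.sum_congr rfl (fun s _ => h1 s), Finset.sum_congr rfl (fun s _ => h2 s)]
  push_cast
  ring

lemma expAbsSRW_symm (ℓ : ℕ) : expAbsSRW 1 ℓ = expAbsSRW (-1) ℓ := by
  unfold expAbsSRW
  congr 1
  refine Fintype.sum_equiv ⟨fun s i => !s i, fun s i => !s i, fun s => by funext i; simp,
      fun s => by funext i; simp⟩ _ _ ?_
  intro s
  have hsum : ∑ i, (if !s i then (1 : ℝ) else -1) =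
      -∑ i, (if s i then (1 : ℝ) else -1) := by
    rw [← Finset.sum_neg_distrib]
    exact Finset.sum_congr rfl fun i _ => by cases s i <;> simp
  simp only [Equiv.coe_fn_mk, hsum]
  push_cast
  rw [← abs_neg]
  congr 1
  ring

theorem stmt_12 :
    (∀ x : ℤ, x ≤ 0 → gSRW x 0 = 0) ∧
    (∀ (x : ℤ) (ℓ : ℕ), 0 < ℓ → x < 0 →
      gSRW x ℓ = (gSRW (x + 1) (ℓ - 1) + gSRW (x - 1) (ℓ - 1)) / 2) ∧
    (∀ ℓ : ℕ, 0 < ℓ → gSRW 0 ℓ = gSRW (-1) (ℓ - 1) + 1 / 2) := by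
  refine ⟨fun x _ => ?_, fun x ℓ hℓ hx => ?_, fun ℓ hℓ => ?_⟩
  · simp [gSRW, expAbsSRW]
  · obtain ⟨m, rfl⟩ := Nat.exists_eq_succ_of_ne_zero hℓ.ne'
    simp only [Nat.succ_sub_one]
    have habs : |((x : ℤ) : ℝ) + 1| + |((x : ℤ) : ℝ) - 1| = 2 * |((x : ℤ) : ℝ)| := by
      have hx0 : x ≤ -1 := by omega
      have hx' : ((x : ℤ) : ℝ) ≤ -1 := by exact_mod_cast hx0
      rw [abs_of_nonpos (by linarith), abs_of_nonpos (by linarith),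
        abs_of_nonpos (by linarith)]
      ring
    unfold gSRW
    rw [expAbsSRW_succ]
    push_cast at habs ⊢
    linarith
  · obtain ⟨m, rfl⟩ := Nat.exists_eq_succ_of_ne_zero hℓ.ne'
    simp only [Nat.succ_sub_one]
    unfold gSRW
    rw [expAbsSRW_succ]
    have := expAbsSRW_symm m
    norm_num
    linarith
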